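/- arXiv:1701.05665 — 2 statements merged into one kernel-verified Lean document; each statement's English description precedes it below -/
import Mathlib

section
/- Consider the linear repetitive process y_k = G₀^k y₀ + ∑_{i=1}^k G₀^{k−i} H x_i(0) where G₀ and H are bounded linear operators on a normed space, and ‖G₀^k‖ ≤ M ζ^k with M ≥ 1, ζ ∈ (0,1). If the initial-state sequence (x_i(0)) has finite e_λ norm for some λ ∈ (0,1), then with λ̄ = max{ζ,λ}, ‖y_k‖ ≤ M·max{1, 2‖H‖/(1−λ̄)} · ((1+λ̄)/2)^k · (‖y₀‖ + ‖x(0)‖_{e_λ}) for all k ∈ ℕ. -/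
private lemma kpow_aux (b : ℝ) (hb0 : 0 < b) (hb1 : b < 1) :
    ∀ k : ℕ, (k : ℝ) * b ^ (k - 1) ≤ 2 / (1 - b) * ((1 + b) / 2) ^ k := by
  intro k
  set μ := (1 + b) / 2 with hμ
  have hbμ : b < μ := by rw [hμ]; linarith
  have hμ0 : 0 < μ := lt_trans hb0 hbμ
  cases k with
  | zero =>
    have h1b : (0:ℝ) < 1 - b := by linarith
    simp only [Nat.cast_zero, zero_mul, pow_zero, mul_one]
    positivity
  | succ n =>
    set r := b / μ with hr
    have hr0 : 0 ≤ r := by positivity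
    have hr1 : r < 1 := (div_lt_one hμ0).mpr hbμ
    have hbr : b = r * μ := (div_mul_cancel₀ b hμ0.ne').symm
    have h1r : (0:ℝ) < 1 - r := by linarith
    have h1b : (0:ℝ) < 1 - b := by linarith
    have h1 : (n + 1 : ℝ) * r ^ n ≤ ∑ j ∈ Finset.range (n + 1), r ^ j := by
      have hterm : ∀ j ∈ Finset.range (n + 1), r ^ n ≤ r ^ j := by
        intro j hj
        exact pow_le_pow_of_le_one hr0 hr1.le (Nat.lt_succ_iff.mp (Finset.mem_range.mp hj))
      calc (n + 1 : ℝ) * r ^ n = ∑ _j ∈ Finset.range (n + 1), r ^ n := by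
            rw [Finset.sum_const, Finset.card_range]; push_cast; ring
        _ ≤ _ := Finset.sum_le_sum hterm
    have h2 : ∑ j ∈ Finset.range (n + 1), r ^ j ≤ 1 / (1 - r) := by
      rw [geom_sum_eq hr1.ne]
      have e : (r ^ (n+1) - 1) / (r - 1) = (1 - r ^ (n+1)) / (1 - r) := by
        rw [div_eq_div_iff (by linarith) (by linarith)]; ring
      rw [e]
      gcongr
      nlinarith [pow_nonneg hr0 (n + 1)]
    have h3 : (n + 1 : ℝ) * r ^ n ≤ (1 + b) / (1 - b) := by
      refine (h1.trans h2).trans_eq ?_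
      have hb2 : (1 + b) ≠ 0 := by positivity
      have e1 : 1 - b / ((1 + b) / 2) = (1 - b) / (1 + b) := by
        field_simp; ring
      rw [hr, hμ, e1, one_div_div]
    have hμn : (0:ℝ) < μ ^ n := pow_pos hμ0 n
    have heq : ((n:ℝ) + 1) * b ^ n = ((n + 1 : ℝ) * r ^ n) * μ ^ n := by
      rw [hbr, mul_pow]; ring
    have h6 : 2 / (1 - b) * μ ^ (n + 1) = (1 + b) / (1 - b) * μ ^ n := by
      have e2 : (2:ℝ) / (1 - b) * μ = (1 + b) / (1 - b) := by
        rw [hμ]; field_simp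
      calc 2 / (1 - b) * μ ^ (n + 1) = (2 / (1 - b) * μ) * μ ^ n := by rw [pow_succ]; ring
        _ = (1 + b) / (1 - b) * μ ^ n := by rw [e2]
    simp only [Nat.add_sub_cancel]
    push_cast
    rw [heq, h6]
    exact mul_le_mul_of_nonneg_right h3 hμn.le

theorem ltv_drp_exponential_stability_bound
    {E Yo : Type*} [NormedAddCommGroup E] [NormedSpace ℝ E]
    [NormedAddCommGroup Yo] [NormedSpace ℝ Yo]
    (G₀ : Yo →L[ℝ] Yo) (H : E →L[ℝ] Yo)
    (M ζ lam : ℝ) (hM : 1 ≤ M) (hζ : ζ ∈ Set.Ioo (0:ℝ) 1) (hlam : lam ∈ Set.Ioo (0:ℝ) 1)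
    (hG : ∀ k : ℕ, ‖G₀ ^ k‖ ≤ M * ζ ^ k)
    (y₀ : Yo) (x : ℕ → E)
    (hbdd : BddAbove (Set.range fun k : ℕ => ‖x (k + 1)‖ / lam ^ k)) :
    ∀ k : ℕ,
      ‖(G₀ ^ k) y₀ + ∑ i ∈ Finset.Icc 1 k, (G₀ ^ (k - i)) (H (x i))‖ ≤
        M * max 1 (2 * ‖H‖ / (1 - max ζ lam)) * ((1 + max ζ lam) / 2) ^ k *
          (‖y₀‖ + ⨆ k : ℕ, ‖x (k + 1)‖ / lam ^ k) := by
  intro k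
  obtain ⟨hζ0, hζ1⟩ := hζ
  obtain ⟨hl0, hl1⟩ := hlam
  have hM0 : (0:ℝ) < M := lt_of_lt_of_le one_pos hM
  set b := max ζ lam with hb
  have hb0 : 0 < b := lt_max_of_lt_left hζ0
  have hb1 : b < 1 := max_lt hζ1 hl1
  set μ := (1 + b) / 2 with hμ
  have hbμ : b < μ := by rw [hμ]; linarith
  have hμ0 : 0 < μ := lt_trans hb0 hbμ
  set S := ⨆ j : ℕ, ‖x (j + 1)‖ / lam ^ j with hSdef
  have hSle : ∀ j : ℕ, ‖x (j + 1)‖ / lam ^ j ≤ S := fun j => le_ciSup hbdd j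
  have hS0 : 0 ≤ S := le_trans (by positivity) (hSle 0)
  have hxle : ∀ i : ℕ, 1 ≤ i → ‖x i‖ ≤ S * b ^ (i - 1) := by
    intro i hi
    have h1 := hSle (i - 1)
    rw [Nat.sub_add_cancel hi] at h1
    have h2 : ‖x i‖ ≤ S * lam ^ (i - 1) := by
      rw [div_le_iff₀ (by positivity)] at h1; linarith
    refine h2.trans ?_
    have hpow : lam ^ (i-1) ≤ b ^ (i-1) := pow_le_pow_left₀ hl0.le (le_max_right _ _) _
    exact mul_le_mul_of_nonneg_left hpow hS0
  -- per-term bound in the sum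
  have hterm : ∀ i ∈ Finset.Icc 1 k, ‖(G₀ ^ (k - i)) (H (x i))‖ ≤ M * ‖H‖ * S * b ^ (k - 1) := by
    intro i hi
    obtain ⟨hi1, hik⟩ := Finset.mem_Icc.mp hi
    have h1 : ‖(G₀ ^ (k - i)) (H (x i))‖ ≤ ‖G₀ ^ (k - i)‖ * (‖H‖ * ‖x i‖) :=
      le_trans (ContinuousLinearMap.le_opNorm _ _)
        (mul_le_mul_of_nonneg_left (ContinuousLinearMap.le_opNorm _ _) (norm_nonneg _))
    refine h1.trans ?_
    have h2 : ‖G₀ ^ (k - i)‖ ≤ M * b ^ (k - i) := by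
      refine (hG (k - i)).trans ?_
      exact mul_le_mul_of_nonneg_left (pow_le_pow_left₀ hζ0.le (le_max_left _ _) _) hM0.le
    have h3 : ‖H‖ * ‖x i‖ ≤ ‖H‖ * (S * b ^ (i - 1)) :=
      mul_le_mul_of_nonneg_left (hxle i hi1) (norm_nonneg _)
    have h4 : b ^ (k - i) * b ^ (i - 1) = b ^ (k - 1) := by
      rw [← pow_add]; congr 1; omega
    calc ‖G₀ ^ (k - i)‖ * (‖H‖ * ‖x i‖)
        ≤ (M * b ^ (k - i)) * (‖H‖ * (S * b ^ (i - 1))) := by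
          apply mul_le_mul h2 h3 (by positivity) (by positivity)
      _ = M * ‖H‖ * S * (b ^ (k - i) * b ^ (i - 1)) := by ring
      _ = M * ‖H‖ * S * b ^ (k - 1) := by rw [h4]
  have hsum : ‖∑ i ∈ Finset.Icc 1 k, (G₀ ^ (k - i)) (H (x i))‖ ≤
      (k : ℝ) * (M * ‖H‖ * S * b ^ (k - 1)) := by
    refine (norm_sum_le _ _).trans ?_
    refine (Finset.sum_le_sum hterm).trans_eq ?_
    rw [Finset.sum_const, Nat.card_Icc]
    simp [nsmul_eq_mul]
  have hfirst : ‖(G₀ ^ k) y₀‖ ≤ M * b ^ k * ‖y₀‖ := by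
    refine (ContinuousLinearMap.le_opNorm _ _).trans ?_
    have : ‖G₀ ^ k‖ ≤ M * b ^ k := (hG k).trans
      (mul_le_mul_of_nonneg_left (pow_le_pow_left₀ hζ0.le (le_max_left _ _) _) hM0.le)
    exact mul_le_mul_of_nonneg_right this (norm_nonneg _)
  have hk : (k : ℝ) * b ^ (k - 1) ≤ 2 / (1 - b) * μ ^ k := kpow_aux b hb0 hb1 k
  set C := max 1 (2 * ‖H‖ / (1 - b)) with hC
  have hC1 : (1:ℝ) ≤ C := le_max_left _ _
  have hCH : 2 * ‖H‖ / (1 - b) ≤ C := le_max_right _ _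
  have hμk : (0:ℝ) < μ ^ k := pow_pos hμ0 k
  have hbk : b ^ k ≤ μ ^ k := pow_le_pow_left₀ hb0.le hbμ.le k
  calc ‖(G₀ ^ k) y₀ + ∑ i ∈ Finset.Icc 1 k, (G₀ ^ (k - i)) (H (x i))‖
      ≤ ‖(G₀ ^ k) y₀‖ + ‖∑ i ∈ Finset.Icc 1 k, (G₀ ^ (k - i)) (H (x i))‖ := norm_add_le _ _
    _ ≤ M * b ^ k * ‖y₀‖ + (k : ℝ) * (M * ‖H‖ * S * b ^ (k - 1)) := add_le_add hfirst hsum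
    _ ≤ M * C * μ ^ k * (‖y₀‖ + S) := by
        have e1 : M * b ^ k * ‖y₀‖ ≤ M * C * μ ^ k * ‖y₀‖ := by
          have : M * b ^ k ≤ M * C * μ ^ k := by
            calc M * b ^ k ≤ M * μ ^ k := by
                  exact mul_le_mul_of_nonneg_left hbk hM0.le
              _ ≤ M * C * μ ^ k :=
                  mul_le_mul_of_nonneg_right (le_mul_of_one_le_right hM0.le hC1) hμk.le
          exact mul_le_mul_of_nonneg_right this (norm_nonneg _)
        have e2 : (k : ℝ) * (M * ‖H‖ * S * b ^ (k - 1)) ≤ M * C * μ ^ k * S := by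
          have h5 : (k : ℝ) * (M * ‖H‖ * S * b ^ (k - 1))
              = (M * ‖H‖ * S) * ((k : ℝ) * b ^ (k - 1)) := by ring
          rw [h5]
          calc (M * ‖H‖ * S) * ((k : ℝ) * b ^ (k - 1))
              ≤ (M * ‖H‖ * S) * (2 / (1 - b) * μ ^ k) := by
                exact mul_le_mul_of_nonneg_left hk (by positivity)
            _ = M * (2 * ‖H‖ / (1 - b)) * μ ^ k * S := by ring
            _ ≤ M * C * μ ^ k * S := by
                have : M * (2 * ‖H‖ / (1 - b)) * μ ^ k ≤ M * C * μ ^ k := by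
                  exact mul_le_mul_of_nonneg_right
                    (mul_le_mul_of_nonneg_left hCH hM0.le) hμk.le
                exact mul_le_mul_of_nonneg_right this hS0
        calc M * b ^ k * ‖y₀‖ + (k : ℝ) * (M * ‖H‖ * S * b ^ (k - 1))
            ≤ M * C * μ ^ k * ‖y₀‖ + M * C * μ ^ k * S := add_le_add e1 e2
          _ = M * C * μ ^ k * (‖y₀‖ + S) := by ring
end

section
/- Let F : Y → Y with F(0) = 0 on a normed space Y, and suppose there exist K ≥ 1, γ ∈ (0,1), δ > 0 such that ‖y‖ < δ implies ‖F^k(y)‖ ≤ K γ^k ‖y‖ for all k ∈ ℕ. Then, choosing N ∈ ℕ with K γ^N < 1, the functional V(y) = ∑_{i=0}^{N−1} ‖F^i(y)‖ satisfies, for all y with ‖y‖ < δ: (i) ‖y‖ ≤ V(y) ≤ (K/(1−γ))‖y‖, and (ii) V(F(y)) − V(y) ≤ −(1 − Kγ^N)‖y‖. -/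
theorem converse_lyapunov_construction
    {Y : Type*} [NormedAddCommGroup Y] [NormedSpace ℝ Y]
    (F : Y → Y) (hF0 : F 0 = 0)
    (K γ δ : ℝ) (hK : 1 ≤ K) (hγ : γ ∈ Set.Ioo (0:ℝ) 1) (hδ : 0 < δ)
    (hstab : ∀ y : Y, ‖y‖ < δ → ∀ k : ℕ, ‖F^[k] y‖ ≤ K * γ ^ k * ‖y‖)
    (N : ℕ) (hN : K * γ ^ N < 1) :
    ∀ y : Y, ‖y‖ < δ →
      (‖y‖ ≤ ∑ i ∈ Finset.range N, ‖F^[i] y‖) ∧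
      (∑ i ∈ Finset.range N, ‖F^[i] y‖ ≤ (K / (1 - γ)) * ‖y‖) ∧
      ((∑ i ∈ Finset.range N, ‖F^[i] (F y)‖) - ∑ i ∈ Finset.range N, ‖F^[i] y‖ ≤
        -(1 - K * γ ^ N) * ‖y‖) := by
  obtain ⟨hγ0, hγ1⟩ := hγ
  intro y hy
  have hN1 : 1 ≤ N := by
    by_contra h
    push_neg at h
    interval_cases N
    simp at hN
    linarith
  refine ⟨?_, ?_, ?_⟩
  · calc ‖y‖ = ‖F^[0] y‖ := by simp
      _ ≤ ∑ i ∈ Finset.range N, ‖F^[i] y‖ :=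
        Finset.single_le_sum (f := fun i => ‖F^[i] y‖) (fun i _ => norm_nonneg _)
          (Finset.mem_range.mpr (by omega : 0 < N))
  · have hgeo : ∑ i ∈ Finset.range N, γ ^ i ≤ 1 / (1 - γ) := by
      rw [geom_sum_eq (ne_of_lt hγ1)]
      have h : (γ ^ N - 1) / (γ - 1) = (1 - γ ^ N) / (1 - γ) := by
        rw [← neg_div_neg_eq]; ring_nf
      rw [h, div_le_div_iff₀ (by linarith) (by linarith)]
      have : (0:ℝ) ≤ γ ^ N := by positivity
      nlinarith
    calc ∑ i ∈ Finset.range N, ‖F^[i] y‖ ≤ ∑ i ∈ Finset.range N, K * γ ^ i * ‖y‖ :=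
          Finset.sum_le_sum (fun i _ => hstab y hy i)
      _ = K * (∑ i ∈ Finset.range N, γ ^ i) * ‖y‖ := by
          rw [Finset.mul_sum, Finset.sum_mul]
      _ ≤ K / (1 - γ) * ‖y‖ := by
          have hK0 : (0:ℝ) < K := by linarith
          have h1 : K * (∑ i ∈ Finset.range N, γ ^ i) ≤ K / (1 - γ) := by
            calc K * (∑ i ∈ Finset.range N, γ ^ i) ≤ K * (1 / (1 - γ)) :=
                  mul_le_mul_of_nonneg_left hgeo (le_of_lt hK0)
              _ = K / (1 - γ) := by ring
          exact mul_le_mul_of_nonneg_right h1 (norm_nonneg _)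
  · have hiter : ∀ i : ℕ, F^[i] (F y) = F^[i+1] y := fun i =>
      (Function.iterate_succ_apply F i y).symm
    have h1 : (∑ i ∈ Finset.range N, ‖F^[i+1] y‖) + ‖F^[0] y‖ =
        ∑ i ∈ Finset.range (N+1), ‖F^[i] y‖ :=
      (Finset.sum_range_succ' (fun i => ‖F^[i] y‖) N).symm
    rw [Finset.sum_range_succ] at h1
    have h2 : ∑ i ∈ Finset.range N, ‖F^[i] (F y)‖ = ∑ i ∈ Finset.range N, ‖F^[i+1] y‖ := by
      simp only [hiter]
    have hFN := hstab y hy N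
    simp only [Function.iterate_zero_apply] at h1
    rw [h2]
    linarith
end
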